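/- Let a, b, c > 0 be real numbers, and consider the 3×3 generalized eigenvalue problem K x = λ B x, where K = [[b+c, −c, −b], [−c, a+c, −a], [−b, −a, a+b]] and B = diag(bc, ac, ab). Then: (i) λ = 0 is a generalized eigenvalue with one-dimensional eigenspace spanned by (1, 1, 1)ᵀ; (ii) λ* = 1/a + 1/b + 1/c is a generalized eigenvalue whose eigenspace is two-dimensional and spanned by (1, 0, −c/a)ᵀ and (0, 1, −c/b)ᵀ; and (iii) these are the only generalized eigenvalues: every nonzero x with K x = λ B x has λ ∈ {0, λ*}. Moreover, the λ*-eigenvectors x = (x₁, x₂, x₃) are exactly the nonzero solutions of the constraint bc·x₁ + ac·x₂ + ab·x₃ = 0. -/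

import Mathlib

open Matrix

/-- For `a, b, c > 0`, the 3×3 generalized eigenvalue problem
`K x = λ B x` with `K = [[b+c,-c,-b],[-c,a+c,-a],[-b,-a,a+b]]` and
`B = diag(bc, ac, ab)` has exactly the generalized eigenvalues `0` (with
one-dimensional eigenspace spanned by `(1,1,1)ᵀ`) and `λ* = 1/a + 1/b + 1/c`
(with two-dimensional eigenspace spanned by `(1,0,-c/a)ᵀ` and `(0,1,-c/b)ᵀ`);
moreover the `λ*`-eigenvectors are exactly the nonzero solutions of
`bc·x₁ + ac·x₂ + ab·x₃ = 0`. -/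
theorem stmt17 (a b c : ℝ) (ha : 0 < a) (hb : 0 < b) (hc : 0 < c) :
    let K : Matrix (Fin 3) (Fin 3) ℝ :=
      !![b + c, -c, -b; -c, a + c, -a; -b, -a, a + b]
    let B : Matrix (Fin 3) (Fin 3) ℝ := Matrix.diagonal ![b * c, a * c, a * b]
    let lamStar : ℝ := 1 / a + 1 / b + 1 / c
    -- (i) λ = 0 is a generalized eigenvalue with eigenspace spanned by (1,1,1)ᵀ
    ((∀ x : Fin 3 → ℝ, K.mulVec x = (0 : ℝ) • B.mulVec x ↔
        ∃ t : ℝ, x = t • ![1, 1, 1]) ∧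
    -- (ii) λ* is a generalized eigenvalue with two-dimensional eigenspace
    (∀ x : Fin 3 → ℝ, K.mulVec x = lamStar • B.mulVec x ↔
        ∃ s t : ℝ, x = s • ![1, 0, -(c / a)] + t • ![0, 1, -(c / b)]) ∧
    LinearIndependent ℝ ![![(1 : ℝ), 0, -(c / a)], ![0, 1, -(c / b)]] ∧
    -- (iii) every generalized eigenvalue is 0 or λ*
    (∀ (lam : ℝ) (x : Fin 3 → ℝ), x ≠ 0 → K.mulVec x = lam • B.mulVec x →
        lam = 0 ∨ lam = lamStar) ∧
    -- the λ*-eigenvectors are exactly the nonzero solutions of the constraint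
    (∀ x : Fin 3 → ℝ, x ≠ 0 →
        (K.mulVec x = lamStar • B.mulVec x ↔
          b * c * x 0 + a * c * x 1 + a * b * x 2 = 0))) := by
  intro K B lamStar
  have ha' : a ≠ 0 := ha.ne'
  have hb' : b ≠ 0 := hb.ne'
  have hc' : c ≠ 0 := hc.ne'
  have hD : a * b + a * c + b * c ≠ 0 := by positivity
  -- a key equivalence: the λ*-eigenvector equation ⇔ the divergence constraint
  have key : ∀ x : Fin 3 → ℝ, K.mulVec x = lamStar • B.mulVec x ↔
      b * c * x 0 + a * c * x 1 + a * b * x 2 = 0 := by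
    intro x
    constructor
    · intro h
      have h0 := congrFun h 0
      simp [K, B, lamStar, Matrix.mulVec, dotProduct, Fin.sum_univ_three] at h0
      field_simp at h0
      have hbc : (b * c) * (b * c * x 0 + a * c * x 1 + a * b * x 2) = 0 := by
        linear_combination (-(b * c)) * h0
      exact (mul_eq_zero.mp hbc).resolve_left (by positivity)
    · intro hcon
      funext i
      fin_cases i
      · simp [K, B, lamStar, Matrix.mulVec, dotProduct, Fin.sum_univ_three]
        field_simp
        linear_combination -hcon
      · simp [K, B, lamStar, Matrix.mulVec, dotProduct, Fin.sum_univ_three]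
        field_simp
        linear_combination -hcon
      · simp [K, B, lamStar, Matrix.mulVec, dotProduct, Fin.sum_univ_three]
        field_simp
        linear_combination -hcon
  refine ⟨?_, ?_, ?_, ?_, ?_⟩
  · -- (i)
    intro x
    constructor
    · intro h
      have h0 := congrFun h 0
      have h1 := congrFun h 1
      simp [K, B, Matrix.mulVec, dotProduct, Fin.sum_univ_three] at h0 h1
      have e0 : x 0 = x 2 := by
        have : (a * b + a * c + b * c) * x 0 = (a * b + a * c + b * c) * x 2 := by
          linear_combination (a + c) * h0 + c * h1
        exact mul_left_cancel₀ hD this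
      have e1 : x 1 = x 2 := by
        have : (a * b + a * c + b * c) * x 1 = (a * b + a * c + b * c) * x 2 := by
          linear_combination c * h0 + (b + c) * h1
        exact mul_left_cancel₀ hD this
      refine ⟨x 2, ?_⟩
      funext i
      fin_cases i <;> simp [e0, e1]
    · rintro ⟨t, rfl⟩
      funext i
      fin_cases i <;>
        simp [K, B, Matrix.mulVec, dotProduct, Fin.sum_univ_three] <;> ring
  · -- (ii)
    intro x
    rw [key x]
    constructor
    · intro hcon
      refine ⟨x 0, x 1, ?_⟩
      funext i
      fin_cases i <;> simp
      field_simp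
      nlinarith [hcon]
    · rintro ⟨s, t, rfl⟩
      simp
      field_simp
      ring
  · -- linear independence
    rw [linearIndependent_fin2]
    constructor
    · intro h
      have := congrFun h 1
      simp at this
    · intro r h
      have := congrFun h 0
      simp at this
  · -- (iii)
    intro lam x hx h
    have h0 := congrFun h 0
    have h1 := congrFun h 1
    have h2 := congrFun h 2
    simp [K, B, Matrix.mulVec, dotProduct, Fin.sum_univ_three] at h0 h1 h2
    by_cases hl : lam = 0
    · exact Or.inl hl
    right
    have hcon : b * c * x 0 + a * c * x 1 + a * b * x 2 = 0 := by
      have hsum : lam * (b * c * x 0 + a * c * x 1 + a * b * x 2) = 0 := by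
        linear_combination -h0 - h1 - h2
      rcases mul_eq_zero.mp hsum with h' | h'
      · exact absurd h' hl
      · exact h'
    by_contra hne
    have hstar : lamStar * (a * b * c) = a * b + a * c + b * c := by
      simp only [lamStar]; field_simp; ring
    have hF : a * b + a * c + b * c - lam * (a * b * c) ≠ 0 := by
      intro hF0
      apply hne
      apply mul_right_cancel₀ (show (a * b * c : ℝ) ≠ 0 by positivity)
      rw [hstar]
      linarith [hF0]
    have e0 : x 0 = 0 := by
      have : (a * b + a * c + b * c - lam * (a * b * c)) * x 0 = 0 := by
        linear_combination a * h0 + hcon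
      exact (mul_eq_zero.mp this).resolve_left hF
    have e1 : x 1 = 0 := by
      have : (a * b + a * c + b * c - lam * (a * b * c)) * x 1 = 0 := by
        linear_combination b * h1 + hcon
      exact (mul_eq_zero.mp this).resolve_left hF
    have e2 : x 2 = 0 := by
      have : (a * b + a * c + b * c - lam * (a * b * c)) * x 2 = 0 := by
        linear_combination c * h2 + hcon
      exact (mul_eq_zero.mp this).resolve_left hF
    apply hx
    funext i
    fin_cases i <;> simp [e0, e1, e2]
  · -- (v)
    intro x _
    exact key x
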